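/- Let A be a commutative Banach algebra and I an ideal in A such that I is dense in A and A² + I = A. Then I is not a maximal ideal. -/

import Mathlib

/-- `M` is an ideal of the (non-unital) commutative algebra `A`. -/
def IsIdeal {A : Type*} [NonUnitalCommRing A] [Module ℂ A] (M : Submodule ℂ A) : Prop :=
  ∀ a : A, ∀ x ∈ M, a * x ∈ M

/-- `M` is a maximal ideal of `A`. -/
def IsMaximalIdeal {A : Type*} [NonUnitalCommRing A] [Module ℂ A] (M : Submodule ℂ A) : Prop :=
  IsIdeal M ∧ M ≠ ⊤ ∧ ∀ N : Submodule ℂ A, IsIdeal N → M ≤ N → N = M ∨ N = ⊤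

/-- `A²`: the linear span of all products `a * b` with `a, b ∈ A`. -/
def sqIdeal (A : Type*) [NonUnitalCommRing A] [Module ℂ A] : Submodule ℂ A :=
  Submodule.span ℂ {x : A | ∃ a b : A, x = a * b}

/-- Let `A` be a commutative Banach algebra and `I` a dense ideal with `A² + I = A`.
Then `I` is not a maximal ideal. -/
theorem dense_ideal_not_maximal
    {A : Type*} [NonUnitalNormedCommRing A] [NormedSpace ℂ A]
    [IsScalarTower ℂ A A] [SMulCommClass ℂ A A] [CompleteSpace A]
    (I : Submodule ℂ A) (hI : IsIdeal I) (hdense : Dense (I : Set A))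
    (hsq : sqIdeal A ⊔ I = ⊤) :
    ¬ IsMaximalIdeal I := by
  rintro ⟨hIdeal, hne, hmax⟩
  -- the "annihilator mod I" ideal
  set N : Submodule ℂ A :=
    { carrier := {x | ∀ a : A, a * x ∈ I}
      add_mem' := fun hx hy a => by
        rw [mul_add]; exact I.add_mem (hx a) (hy a)
      zero_mem' := fun a => by simp [I.zero_mem]
      smul_mem' := fun c x hx a => by
        rw [mul_smul_comm]; exact I.smul_mem c (hx a) } with hNdef
  have hmemN : ∀ x : A, x ∈ N ↔ ∀ a : A, a * x ∈ I := fun x => Iff.rfl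
  have hNideal : IsIdeal N := by
    intro a x hx b
    rw [← mul_assoc]
    exact hx (b * a)
  have hIN : I ≤ N := fun x hx a => hI a x hx
  have hNI : N = I := by
    rcases hmax N hNideal hIN with h | h
    · exact h
    · exfalso
      have hsqle : sqIdeal A ≤ I := by
        rw [sqIdeal, Submodule.span_le]
        rintro _ ⟨a, b, rfl⟩
        have : b ∈ N := h ▸ Submodule.mem_top
        exact this a
      apply hne
      have h2 : sqIdeal A ⊔ I = I := (sup_le_iff.mpr ⟨hsqle, le_refl I⟩).antisymm le_sup_right
      rw [← hsq, h2]
  obtain ⟨x₀, hx₀⟩ : ∃ x₀ : A, x₀ ∉ I := by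
    by_contra h
    push_neg at h
    exact hne (Submodule.eq_top_iff'.mpr h)
  set M : Submodule ℂ A := LinearMap.range (LinearMap.mulLeft ℂ x₀) ⊔ I with hMdef
  have hmemM : ∀ y : A, y ∈ M ↔ ∃ b : A, ∃ i ∈ I, y = x₀ * b + i := by
    intro y
    rw [hMdef, Submodule.mem_sup]
    constructor
    · rintro ⟨p, ⟨b, rfl⟩, q, hq, rfl⟩
      exact ⟨b, q, hq, rfl⟩
    · rintro ⟨b, i, hi, rfl⟩
      exact ⟨x₀ * b, ⟨b, rfl⟩, i, hi, rfl⟩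
  have hMideal : IsIdeal M := by
    intro a y hy
    rw [hmemM] at hy ⊢
    obtain ⟨b, i, hi, rfl⟩ := hy
    refine ⟨a * b, a * i, hI a i hi, ?_⟩
    rw [mul_add]
    congr 1
    simp [mul_comm, mul_assoc, mul_left_comm]
  have hIM : I ≤ M := le_sup_right
  have hM : M = ⊤ := by
    rcases hmax M hMideal hIM with h | h
    · exfalso
      apply hx₀
      rw [← hNI, hmemN]
      intro a
      have : a * x₀ ∈ M := by
        rw [hmemM]
        exact ⟨a, 0, I.zero_mem, by rw [add_zero, mul_comm]⟩
      rwa [h] at this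
    · exact h
  -- relative unit
  obtain ⟨e, i₀, hi₀, hx₀e⟩ : ∃ b : A, ∃ i ∈ I, x₀ = x₀ * b + i := by
    rw [← hmemM, hM]; trivial
  have hmod : ∀ a : A, a - a * e ∈ I := by
    intro a
    have ha : a ∈ M := hM ▸ Submodule.mem_top
    rw [hmemM] at ha
    obtain ⟨b, i, hi, rfl⟩ := ha
    have hi₀' : i₀ = x₀ - x₀ * e := by
      rw [eq_sub_iff_add_eq, add_comm]
      exact hx₀e.symm
    have hb : b * i₀ = x₀ * b - x₀ * b * e := by
      rw [hi₀', mul_sub, mul_comm b x₀, mul_left_comm b x₀ e, ← mul_assoc]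
    have key : (x₀ * b + i) - (x₀ * b + i) * e = b * i₀ + (i - i * e) := by
      rw [hb, add_mul]
      abel
    rw [key]
    exact I.add_mem (hI b i₀ hi₀) (I.sub_mem hi (by rw [mul_comm]; exact hI e i hi))
  -- density: find x ∈ I close to e
  obtain ⟨x, hxI, hxe⟩ : ∃ x ∈ I, ‖e - x‖ < 1 := by
    have he : e ∈ closure (I : Set A) := hdense e
    rw [Metric.mem_closure_iff] at he
    obtain ⟨x, hxI, hx⟩ := he 1 one_pos
    exact ⟨x, hxI, by rwa [dist_eq_norm] at hx⟩
  set u : A := e - x with hu_def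
  have hu : ‖u‖ < 1 := hxe
  have hk : ∀ b : A, b - b * u ∈ I := by
    intro b
    have : b - b * u = (b - b * e) + b * x := by
      rw [hu_def, mul_sub]; abel
    rw [this]
    exact I.add_mem (hmod b) (hI b x hxI)
  -- geometric series
  set f : ℕ → A := fun n => Nat.rec u (fun _ y => u * y) n with hf_def
  have hf0 : f 0 = u := rfl
  have hfs : ∀ n, f (n + 1) = u * f n := fun n => rfl
  have hnorm : ∀ n, ‖f n‖ ≤ ‖u‖ * ‖u‖ ^ n := by
    intro n
    induction n with
    | zero => rw [pow_zero, mul_one, hf0]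
    | succ n ih =>
      rw [hfs]
      calc ‖u * f n‖ ≤ ‖u‖ * ‖f n‖ := norm_mul_le u (f n)
        _ ≤ ‖u‖ * (‖u‖ * ‖u‖ ^ n) :=
          mul_le_mul_of_nonneg_left ih (norm_nonneg u)
        _ = ‖u‖ * ‖u‖ ^ (n + 1) := by ring
  have hsummable : Summable f :=
    Summable.of_norm_bounded ((summable_geometric_of_lt_one (norm_nonneg u) hu).mul_left _)
      hnorm
  set v : A := ∑' n, f n with hv_def
  have hv : v = u + u * v := by
    have h2 : u * (∑' n, f n) = ∑' n, u * f n := by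
      simpa using (ContinuousLinearMap.mul ℂ A u).map_tsum hsummable
    have h3 : ∑' n, f (n + 1) = u * v := by
      rw [hv_def, h2]
      try exact tsum_congr hfs
    calc v = f 0 + ∑' n, f (n + 1) := Summable.tsum_eq_zero_add hsummable
      _ = u + u * v := by rw [hf0, h3]
  have hu_eq : u = v - v * u := by
    rw [eq_sub_iff_add_eq, mul_comm v u]
    exact hv.symm
  have hall : ∀ a : A, a ∈ I := by
    intro a
    have h2 : a * u ∈ I := by
      have : a * u = (a * v) - (a * v) * u := by
        conv_lhs => rw [hu_eq]
        rw [mul_sub, ← mul_assoc]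
      rw [this]
      exact hk (a * v)
    have : a = (a - a * u) + a * u := by abel
    rw [this]
    exact I.add_mem (hk a) h2
  exact hne (Submodule.eq_top_iff'.mpr hall)
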